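/- Let G be a finite group, let a : G → ℝ, and let A be the G-circulant matrix with entries A_{τσ} = a(τ⁻¹σ). Let χ : G → ℂ^× be a group homomorphism, let Y_χ = ∑_{σ ∈ G} a(σ) χ(σ), and let φ = arg(Y_χ) be the principal argument of Y_χ. Then for every τ ∈ G, ∑_{σ ∈ G} a(τ⁻¹σ) sin(arg(χ(σ)) − arg(χ(τ)) − φ) = 0; that is, the point θ₀ = (arg(χ(σ)))_{σ ∈ G} is an equilibrium point of the homogeneous phase-lag Kuramoto model with adjacency matrix A and phase lag φ. -/

import Mathlib

/-- For a finite group `G`, a real function `a : G → ℝ`, the `G`-circulant matrix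
`A_{τσ} = a(τ⁻¹σ)`, a 1-dimensional representation `χ : G → ℂˣ`,
`Y_χ = ∑_σ a(σ) χ(σ)` and `φ = arg(Y_χ)`, the point `θ₀ = (arg χ(σ))_{σ∈G}` is an
equilibrium point of the homogeneous phase-lag Kuramoto model with adjacency matrix `A`
and phase lag `φ`: for every `τ`, `∑_σ a(τ⁻¹σ) sin(arg χ(σ) − arg χ(τ) − φ) = 0`. -/
theorem G_circulant_phase_lag_equilibrium (G : Type*) [Group G] [Fintype G]
    (a : G → ℝ) (χ : G →* ℂˣ) :
    ∀ τ : G, ∑ σ : G, a (τ⁻¹ * σ) *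
        Real.sin ((χ σ : ℂ).arg - (χ τ : ℂ).arg
          - (∑ σ : G, (a σ : ℂ) * (χ σ : ℂ)).arg) = 0 := by
  intro τ
  set Y : ℂ := ∑ σ : G, (a σ : ℂ) * (χ σ : ℂ) with hY
  -- every value of χ has modulus 1
  have habs : ∀ g : G, ‖(χ g : ℂ)‖ = 1 := by
    intro g
    have h1 : ((χ g : ℂ)) ^ (Fintype.card G) = 1 := by
      have hg : g ^ Fintype.card G = 1 := pow_card_eq_one
      calc ((χ g : ℂ)) ^ (Fintype.card G)
          = ((χ (g ^ Fintype.card G) : ℂˣ) : ℂ) := by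
            rw [map_pow]; push_cast; ring
        _ = 1 := by rw [hg, map_one, Units.val_one]
    exact Complex.norm_eq_one_of_pow_eq_one h1 Fintype.card_ne_zero
  have hexp : ∀ g : G, Complex.exp (((χ g : ℂ).arg : ℂ) * Complex.I) = (χ g : ℂ) := by
    intro g
    have := Complex.norm_mul_exp_arg_mul_I (χ g : ℂ)
    rwa [habs g, Complex.ofReal_one, one_mul] at this
  have hτne : (χ τ : ℂ) ≠ 0 := Units.ne_zero _
  -- each summand as an imaginary part
  have key : ∀ σ : G, a (τ⁻¹ * σ) *
      Real.sin ((χ σ : ℂ).arg - (χ τ : ℂ).arg - Y.arg)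
      = (((a (τ⁻¹ * σ) : ℂ) * (χ σ : ℂ)) *
          ((χ τ : ℂ)⁻¹ * Complex.exp (-(Y.arg : ℂ) * Complex.I))).im := by
    intro σ
    have h1 : (χ σ : ℂ) * ((χ τ : ℂ)⁻¹ * Complex.exp (-(Y.arg : ℂ) * Complex.I))
        = Complex.exp ((((χ σ : ℂ).arg - (χ τ : ℂ).arg - Y.arg : ℝ) : ℂ) * Complex.I) := by
      rw [Complex.ofReal_sub, Complex.ofReal_sub, sub_mul, sub_mul, Complex.exp_sub,
        Complex.exp_sub, hexp σ, hexp τ, neg_mul, Complex.exp_neg]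
      field_simp
    rw [mul_assoc, h1, Complex.mul_im]
    simp [Complex.exp_im, Complex.exp_re]
  calc ∑ σ : G, a (τ⁻¹ * σ) *
        Real.sin ((χ σ : ℂ).arg - (χ τ : ℂ).arg - Y.arg)
      = ∑ σ : G, (((a (τ⁻¹ * σ) : ℂ) * (χ σ : ℂ)) *
          ((χ τ : ℂ)⁻¹ * Complex.exp (-(Y.arg : ℂ) * Complex.I))).im :=
        Finset.sum_congr rfl fun σ _ => key σ
    _ = ((∑ σ : G, (a (τ⁻¹ * σ) : ℂ) * (χ σ : ℂ)) *
          ((χ τ : ℂ)⁻¹ * Complex.exp (-(Y.arg : ℂ) * Complex.I))).im := by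
        rw [← Complex.im_sum, ← Finset.sum_mul]
    _ = (((χ τ : ℂ) * Y) *
          ((χ τ : ℂ)⁻¹ * Complex.exp (-(Y.arg : ℂ) * Complex.I))).im := by
        congr 2
        rw [hY, Finset.mul_sum]
        apply Fintype.sum_equiv (Equiv.mulLeft τ⁻¹)
        intro x
        have hχ : (χ (τ⁻¹ * x) : ℂ) = (χ τ : ℂ)⁻¹ * (χ x : ℂ) := by
          rw [map_mul, map_inv, Units.val_mul]
          simp
        simp only [Equiv.coe_mulLeft, hχ]
        field_simp
    _ = (Y * Complex.exp (-(Y.arg : ℂ) * Complex.I)).im := by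
        congr 1
        field_simp
    _ = ((‖Y‖ : ℝ) : ℂ).im := by
        congr 1
        nth_rewrite 1 [← Complex.norm_mul_exp_arg_mul_I Y]
        rw [mul_assoc, ← Complex.exp_add, neg_mul, add_neg_cancel, Complex.exp_zero, mul_one]
    _ = 0 := Complex.ofReal_im _
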